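/- Let G be a finite group, N ⊴ G, and x, y ∈ N noncommuting elements of coprime prime-power orders (x a p-element, y a q-element, p ≠ q) such that every G-class in N has size coprime to |x^G| or to |y^G|. Let K = C_G(x) ∩ C_G(y) and π = π(|x^G|) ∪ π(|y^G|). Then every π'-element z of K ∩ N has |z^G| a π'-number. -/

import Mathlib

def classSet {G : Type*} [Group G] (x : G) : Set G := {y | IsConj x y}

noncomputable def classSize {G : Type*} [Group G] (x : G) : ℕ := Nat.card (classSet x)

section Helpers

open Pointwise

variable {G : Type*} [Group G]

lemma mem_cent_single {a g : G} : g ∈ Subgroup.centralizer {a} ↔ Commute a g := by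
  rw [Subgroup.mem_centralizer_singleton_iff]
  exact ⟨fun h => Commute.symm h, fun h => Commute.symm h⟩

lemma classSize_eq_index (x : G) : classSize x = (Subgroup.centralizer {x}).index := by
  have h1 : classSet x = MulAction.orbit (ConjAct G) x := by
    ext w
    rw [classSet, Set.mem_setOf_eq, ConjAct.mem_orbit_conjAct]
    constructor <;> exact IsConj.symm
  rw [classSize, h1, Nat.card_coe_set_eq, ← MulAction.index_stabilizer,
    Subgroup.centralizer_eq_comap_stabilizer]
  exact (Subgroup.index_comap_of_surjective _ (MulEquiv.surjective _)).symm

lemma classSize_congr {x x' : G} (h : IsConj x x') : classSize x = classSize x' := by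
  have hs : classSet x = classSet x' := by
    ext w
    simp only [classSet, Set.mem_setOf_eq]
    exact ⟨fun hw => h.symm.trans hw, fun hw => h.trans hw⟩
  rw [classSize, hs, classSize]

lemma commute_all {x : G} (h : classSize x = 1) (w : G) : Commute x w := by
  rw [classSize_eq_index] at h
  have htop := Subgroup.index_eq_one.mp h
  have : w ∈ Subgroup.centralizer {x} := by rw [htop]; trivial
  exact mem_cent_single.mp this

lemma centralizer_mul_le_left {a b : G} (h : Commute a b)
    (hco : Nat.Coprime (orderOf a) (orderOf b)) :
    Subgroup.centralizer {a * b} ≤ Subgroup.centralizer {a} := by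
  obtain ⟨k, hk1, hk2⟩ := Nat.chineseRemainder hco 1 0
  have hpow : (a * b) ^ k = a := by
    have hb : b ^ k = 1 := orderOf_dvd_iff_pow_eq_one.mp (Nat.modEq_zero_iff_dvd.mp hk2)
    have ha : a ^ k = a ^ 1 := pow_eq_pow_iff_modEq.mpr hk1
    rw [h.mul_pow, hb, ha, pow_one, mul_one]
  intro g hg
  have hg' : Commute (a * b) g := mem_cent_single.mp hg
  have := hg'.pow_left k
  rw [hpow] at this
  exact mem_cent_single.mpr this

lemma centralizer_mul_le_right {a b : G} (h : Commute a b)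
    (hco : Nat.Coprime (orderOf a) (orderOf b)) :
    Subgroup.centralizer {a * b} ≤ Subgroup.centralizer {b} := by
  rw [h.eq]
  exact centralizer_mul_le_left h.symm hco.symm

lemma classSize_dvd {x w : G}
    (hle : Subgroup.centralizer {w} ≤ Subgroup.centralizer {x}) :
    classSize x ∣ classSize w := by
  rw [classSize_eq_index, classSize_eq_index]
  exact Subgroup.index_dvd_of_le hle

lemma exists_sylow_le [Finite G] {p : ℕ} [Fact p.Prime] {H : Subgroup G}
    (h : ¬ p ∣ H.index) : ∃ Q : Sylow p G, ↑Q ≤ H := by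
  obtain ⟨S⟩ : Nonempty (Sylow p H) := inferInstance
  have hS : IsPGroup p (S.1.map H.subtype) := S.2.map _
  obtain ⟨Q, hQ⟩ := hS.exists_le_sylow
  have hcard : Nat.card (S.1.map H.subtype) = Nat.card S.1 :=
    Nat.card_congr (S.1.equivMapOfInjective H.subtype H.subtype_injective).symm.toEquiv
  have hfact : (Nat.card G).factorization p = (Nat.card H).factorization p := by
    have hG : Nat.card H * H.index = Nat.card G := H.card_mul_index
    rw [← hG, Nat.factorization_mul Nat.card_pos.ne' Subgroup.index_ne_zero_of_finite,
      Finsupp.add_apply, Nat.factorization_eq_zero_of_not_dvd h, add_zero]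
  have hQcard : Nat.card Q.1 = Nat.card (S.1.map H.subtype) := by
    rw [hcard]
    have h1 : Nat.card Q.1 = p ^ (Nat.card G).factorization p := Q.card_eq_multiplicity
    have h2 : Nat.card S.1 = p ^ (Nat.card H).factorization p := S.card_eq_multiplicity
    rw [h1, h2, hfact]
  have heq : S.1.map H.subtype = Q.1 :=
    Subgroup.eq_of_le_of_card_ge hQ (le_of_eq hQcard)
  refine ⟨Q, ?_⟩
  rw [← heq]
  exact Subgroup.map_subtype_le S.1

/-- Key step: under the hypotheses of the theorem, `p` divides `classSize y`. -/
lemma key_step [Finite G] (N : Subgroup G) (hN : N.Normal)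
    {p q : ℕ} (hp : p.Prime) (hq : q.Prime) (hpq : p ≠ q)
    (x y : G) (hx : x ∈ N) (hy : y ∈ N) (hnc : ¬ Commute x y)
    (hxp : ∃ a : ℕ, orderOf x = p ^ a) (hyq : ∃ b : ℕ, orderOf y = q ^ b)
    (hcl : ∀ z ∈ N, Nat.Coprime (classSize z) (classSize x) ∨
      Nat.Coprime (classSize z) (classSize y)) :
    p ∣ classSize y := by
  by_contra hpy
  haveI : Fact p.Prime := ⟨hp⟩
  rw [classSize_eq_index] at hpy
  obtain ⟨Q, hQle⟩ := exists_sylow_le hpy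
  obtain ⟨a, ha⟩ := hxp
  obtain ⟨b, hb⟩ := hyq
  have hxpg : IsPGroup p (Subgroup.zpowers x) :=
    IsPGroup.of_card (by rw [Nat.card_zpowers, ha])
  obtain ⟨R, hR⟩ := hxpg.exists_le_sylow
  obtain ⟨g, hg⟩ := MulAction.exists_smul_eq G R Q
  set x' := g * x * g⁻¹ with hx'def
  have hxR : x ∈ R := hR (Subgroup.mem_zpowers x)
  have hx'Q : x' ∈ Q := by
    have hmem : (MulAut.conj g) • x ∈ (MulAut.conj g) • R.toSubgroup :=
      Subgroup.smul_mem_pointwise_smul x _ _ hxR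
    have hmem2 : x' ∈ ((g • R : Sylow p G) : Subgroup G) := by
      rw [Sylow.coe_subgroup_smul]
      simpa [MulAut.smul_def, MulAut.conj_apply] using hmem
    rw [hg] at hmem2
    exact hmem2
  have hcomm : Commute x' y := (mem_cent_single.mp (hQle hx'Q)).symm
  have hconj : IsConj x x' := isConj_iff.mpr ⟨g, rfl⟩
  have hx'ord : orderOf x' = p ^ a := by
    have hsc : SemiconjBy g x x' := by
      unfold SemiconjBy
      rw [hx'def]; group
    rw [← hsc.orderOf_eq, ha]
  have hx'N : x' ∈ N := hN.conj_mem x hx g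
  have hwN : x' * y ∈ N := N.mul_mem hx'N hy
  have hcoord : Nat.Coprime (orderOf x') (orderOf y) := by
    rw [hx'ord, hb]
    exact Nat.Coprime.pow _ _ ((Nat.coprime_primes hp hq).mpr hpq)
  have h1 : classSize x' ∣ classSize (x' * y) :=
    classSize_dvd (centralizer_mul_le_left hcomm hcoord)
  have h2 : classSize y ∣ classSize (x' * y) :=
    classSize_dvd (centralizer_mul_le_right hcomm hcoord)
  have hcx : classSize x = classSize x' := classSize_congr hconj
  rcases hcl _ hwN with hco | hco
  · have hx1 : classSize x = 1 := hco.symm.eq_one_of_dvd (by rw [hcx]; exact h1)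
    exact hnc (commute_all hx1 y)
  · have hy1 : classSize y = 1 := hco.symm.eq_one_of_dvd h2
    exact hnc ((commute_all hy1 x).symm)

end Helpers

theorem stmt14 {G : Type*} [Group G] [Finite G] (N : Subgroup G) (hN : N.Normal)
    (p q : ℕ) (hp : p.Prime) (hq : q.Prime) (hpq : p ≠ q)
    (x y : G) (hx : x ∈ N) (hy : y ∈ N) (hnc : ¬ Commute x y)
    (hxp : ∃ a : ℕ, orderOf x = p ^ a) (hyq : ∃ b : ℕ, orderOf y = q ^ b)
    (hcl : ∀ z ∈ N, Nat.Coprime (classSize z) (classSize x) ∨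
      Nat.Coprime (classSize z) (classSize y))
    (π : Set ℕ) (hπ : π = {r | r.Prime ∧ (r ∣ classSize x ∨ r ∣ classSize y)})
    (z : G) (hzK : z ∈ Subgroup.centralizer {x} ⊓ Subgroup.centralizer {y}) (hzN : z ∈ N)
    (hzord : ∀ r : ℕ, r.Prime → r ∣ orderOf z → r ∉ π) :
    ∀ r : ℕ, r.Prime → r ∣ classSize z → r ∉ π := by
  intro r hr hrdvd hrmem
  rw [hπ] at hrmem
  obtain ⟨-, hrxy⟩ := hrmem
  obtain ⟨hzx, hzy⟩ := Subgroup.mem_inf.mp hzK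
  have hcomm_xz : Commute x z := mem_cent_single.mp hzx
  have hcomm_yz : Commute y z := mem_cent_single.mp hzy
  have hpy : p ∣ classSize y := key_step N hN hp hq hpq x y hx hy hnc hxp hyq hcl
  have hqx : q ∣ classSize x :=
    key_step N hN hq hp (Ne.symm hpq) y x hy hx (fun hc => hnc hc.symm) hyq hxp
      (fun w hw => (hcl w hw).symm)
  have hpπ : p ∈ π := by rw [hπ]; exact ⟨hp, Or.inr hpy⟩
  have hqπ : q ∈ π := by rw [hπ]; exact ⟨hq, Or.inl hqx⟩
  have hpz : ¬ p ∣ orderOf z := fun h => hzord p hp h hpπ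
  have hqz : ¬ q ∣ orderOf z := fun h => hzord q hq h hqπ
  obtain ⟨a, ha⟩ := hxp
  obtain ⟨b, hb⟩ := hyq
  have hxn1 : classSize x ≠ 1 := fun h => hnc (commute_all h y)
  have hyn1 : classSize y ≠ 1 := fun h => hnc ((commute_all h x).symm)
  rcases hrxy with hrx | hry
  · -- r divides classSize x : pair z with y
    have hco : Nat.Coprime (orderOf z) (orderOf y) := by
      rw [hb]
      exact ((hq.coprime_iff_not_dvd.mpr hqz).symm).pow_right _
    have hzyN : z * y ∈ N := N.mul_mem hzN hy
    have h1 : classSize z ∣ classSize (z * y) :=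
      classSize_dvd (centralizer_mul_le_left hcomm_yz.symm hco)
    have h2 : classSize y ∣ classSize (z * y) :=
      classSize_dvd (centralizer_mul_le_right hcomm_yz.symm hco)
    rcases hcl _ hzyN with hcp | hcp
    · have : r ∣ Nat.gcd (classSize (z * y)) (classSize x) :=
        Nat.dvd_gcd (hrdvd.trans h1) hrx
      rw [Nat.Coprime] at hcp
      rw [hcp] at this
      exact hr.ne_one (Nat.dvd_one.mp this)
    · exact hyn1 (hcp.symm.eq_one_of_dvd h2)
  · -- r divides classSize y : pair z with x
    have hco : Nat.Coprime (orderOf z) (orderOf x) := by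
      rw [ha]
      exact ((hp.coprime_iff_not_dvd.mpr hpz).symm).pow_right _
    have hzxN : z * x ∈ N := N.mul_mem hzN hx
    have h1 : classSize z ∣ classSize (z * x) :=
      classSize_dvd (centralizer_mul_le_left hcomm_xz.symm hco)
    have h2 : classSize x ∣ classSize (z * x) :=
      classSize_dvd (centralizer_mul_le_right hcomm_xz.symm hco)
    rcases hcl _ hzxN with hcp | hcp
    · exact hxn1 (hcp.symm.eq_one_of_dvd h2)
    · have : r ∣ Nat.gcd (classSize (z * x)) (classSize y) :=
        Nat.dvd_gcd (hrdvd.trans h1) hry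
      rw [Nat.Coprime] at hcp
      rw [hcp] at this
      exact hr.ne_one (Nat.dvd_one.mp this)
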